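/- arXiv:2210.14092 — 4 statements merged into one kernel-verified Lean document; each statement's English description precedes it below -/
import Mathlib

section
/- If X̃₁ and X̃₂ are two fuzzy incidence graphs such that their join X̃ = X̃₁ ⊕ X̃₂ is a strong fuzzy incidence graph, then both X̃₁ and X̃₂ are strong fuzzy incidence graphs. -/
open scoped BigOperators

/-- A fuzzy incidence graph on a finite vertex type `V`.  An (undirected, loopless) edge `xy`
is encoded by the symmetric membership function `rho`, and the incidence pair `(x, xy)`
is encoded by `eta x y` (so `eta x y` is the membership value of the pair consisting of the
vertex `x` and the edge joining `x` and `y`). All membership values lie in `[0,1]`,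
`rho xy ≤ min (eps x) (eps y)` and `eta (x, xy) ≤ min (eps x) (rho xy)`. -/
structure FIG (V : Type) [Fintype V] [DecidableEq V] where
  eps : V → ℝ
  rho : V → V → ℝ
  eta : V → V → ℝ
  eps_nonneg : ∀ x, 0 ≤ eps x
  eps_le_one : ∀ x, eps x ≤ 1
  rho_nonneg : ∀ x y, 0 ≤ rho x y
  rho_symm : ∀ x y, rho x y = rho y x
  rho_le : ∀ x y, rho x y ≤ min (eps x) (eps y)
  rho_irrefl : ∀ x, rho x x = 0
  eta_nonneg : ∀ x y, 0 ≤ eta x y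
  eta_le : ∀ x y, eta x y ≤ min (eps x) (rho x y)

namespace FIG

variable {V V₁ V₂ : Type} [Fintype V] [DecidableEq V]
  [Fintype V₁] [DecidableEq V₁] [Fintype V₂] [DecidableEq V₂]

/-- `(x, xy)` is a pair of the fuzzy incidence graph (i.e. belongs to the support `η*`). -/
def IsPair (G : FIG V) (x y : V) : Prop := 0 < G.eta x y

/-- the minimum of the two pair weights along one edge step of an incidence path -/
def pairMin (G : FIG V) (a b : V) : ℝ := min (G.eta a b) (G.eta b a)

/-- the minimum of the pair weights along the internal steps of a vertex list -/
def chainStrength (G : FIG V) : List V → ℝ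
  | [] => 1
  | [_] => 1
  | a :: b :: l => min (G.pairMin a b) (G.chainStrength (b :: l))

/-- The set of incidence strengths of incidence paths from the vertex `x` to the edge `yz`:
a path is recorded by its (pairwise distinct) sequence of vertices, starting at `x` and ending
at an endpoint of the edge `yz`; its strength is the minimum of the weights of its pairs
(pairs of weight `0` are not genuine pairs, but a list using them has strength `0`, so
including such lists does not alter the supremum below). -/
def pathStrengths (G : FIG V) (x y z : V) : Set ℝ :=
  {s | ∃ l : List V, l.Nodup ∧ l.head? = some x ∧
      ((l.getLast? = some y ∧ s = min (G.chainStrength l) (G.eta y z)) ∨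
       (l.getLast? = some z ∧ s = min (G.chainStrength l) (G.eta z y)))}

/-- `ICONN G x y z` is the greatest incidence strength of an incidence path from the
vertex `x` to the edge `yz` (the incidence connectivity `ICONN_G (x, yz)`). -/
noncomputable def ICONN (G : FIG V) (x y z : V) : ℝ := sSup (G.pathStrengths x y z)

/-- the fuzzy incidence graph obtained by deleting the pair `(a, ab)` -/
def deletePair (G : FIG V) (a b : V) : FIG V where
  eps := G.eps
  rho := G.rho
  eta := fun u v => if u = a ∧ v = b then 0 else G.eta u v
  eps_nonneg := G.eps_nonneg
  eps_le_one := G.eps_le_one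
  rho_nonneg := G.rho_nonneg
  rho_symm := G.rho_symm
  rho_le := G.rho_le
  rho_irrefl := G.rho_irrefl
  eta_nonneg := by
    intro u v; (try dsimp only); split
    · exact le_refl 0
    · exact G.eta_nonneg u v
  eta_le := by
    intro u v; (try dsimp only); split
    · exact le_min (G.eps_nonneg u) (G.rho_nonneg u v)
    · exact G.eta_le u v

/-- The pair `(x, xy)` is strong: its weight is at least the incidence connectivity
between `x` and the edge `xy` in the graph obtained by deleting the pair `(x, xy)`. -/
def IsStrongPair (G : FIG V) (x y : V) : Prop :=
  (G.deletePair x y).ICONN x x y ≤ G.eta x y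

/-- a strong fuzzy incidence graph: every pair is strong -/
def Strong (G : FIG V) : Prop := ∀ x y, G.IsPair x y → G.IsStrongPair x y

/-- The pair `(x, xy)` is effective: `η(x, xy) = min (ε x) (ρ xy)`. -/
def EffectivePair (G : FIG V) (x y : V) : Prop :=
  G.eta x y = min (G.eps x) (G.rho x y)

/-- a fuzzy incidence graph in which every pair is effective -/
def EffectivePairs (G : FIG V) : Prop := ∀ x y, G.IsPair x y → G.EffectivePair x y

/-- The join `G₁ ⊕ G₂` of two fuzzy incidence graphs on disjoint vertex sets:
every vertex of `G₁` is additionally joined to every vertex of `G₂` by an edge of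
weight `min (ε₁ a) (ε₂ b)`, and a pair `(a, ab)` on a join edge has weight
`min (ε₁ a) (ε₂ b) (η(a, avᵢ))` taking the appropriate incident pair of largest weight. -/
noncomputable def join (G₁ : FIG V₁) (G₂ : FIG V₂) : FIG (V₁ ⊕ V₂) where
  eps := Sum.elim G₁.eps G₂.eps
  rho := fun p q =>
    match p, q with
    | .inl a, .inl b => G₁.rho a b
    | .inr a, .inr b => G₂.rho a b
    | .inl a, .inr b => min (G₁.eps a) (G₂.eps b)
    | .inr b, .inl a => min (G₁.eps a) (G₂.eps b)
  eta := fun p q =>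
    match p, q with
    | .inl a, .inl b => G₁.eta a b
    | .inr a, .inr b => G₂.eta a b
    | .inl a, .inr b => min (G₁.eps a) (min (G₂.eps b) (sSup (Set.range (G₁.eta a))))
    | .inr b, .inl a => min (G₁.eps a) (min (G₂.eps b) (sSup (Set.range (G₂.eta b))))
  eps_nonneg := by rintro (a | a) <;> simp [G₁.eps_nonneg, G₂.eps_nonneg]
  eps_le_one := by rintro (a | a) <;> simp [G₁.eps_le_one, G₂.eps_le_one]
  rho_nonneg := by
    rintro (a | a) (b | b) <;> dsimp only
    · exact G₁.rho_nonneg a b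
    · exact le_min (G₁.eps_nonneg a) (G₂.eps_nonneg b)
    · exact le_min (G₁.eps_nonneg b) (G₂.eps_nonneg a)
    · exact G₂.rho_nonneg a b
  rho_symm := by
    rintro (a | a) (b | b) <;>
      first
        | exact G₁.rho_symm _ _
        | exact G₂.rho_symm _ _
        | rfl
  rho_le := by
    rintro (a | a) (b | b) <;> dsimp only
    · exact G₁.rho_le a b
    · exact le_min (min_le_left _ _) (min_le_right _ _)
    · exact le_min (min_le_right _ _) (min_le_left _ _)
    · exact G₂.rho_le a b
  rho_irrefl := by
    rintro (a | a) <;> dsimp only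
    · exact G₁.rho_irrefl a
    · exact G₂.rho_irrefl a
  eta_nonneg := by
    rintro (a | a) (b | b) <;> dsimp only
    · exact G₁.eta_nonneg a b
    · refine le_min (G₁.eps_nonneg a) (le_min (G₂.eps_nonneg b) ?_)
      exact Real.sSup_nonneg (by rintro x ⟨v, rfl⟩; exact G₁.eta_nonneg a v)
    · refine le_min (G₁.eps_nonneg b) (le_min (G₂.eps_nonneg a) ?_)
      exact Real.sSup_nonneg (by rintro x ⟨v, rfl⟩; exact G₂.eta_nonneg a v)
    · exact G₂.eta_nonneg a b
  eta_le := by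
    rintro (a | a) (b | b) <;> dsimp only
    · exact G₁.eta_le a b
    · exact le_min (min_le_left _ _)
        (le_min (min_le_left _ _) (min_le_of_right_le (min_le_left _ _)))
    · exact le_min (min_le_of_right_le (min_le_left _ _))
        (le_min (min_le_left _ _) (min_le_of_right_le (min_le_left _ _)))
    · exact G₂.eta_le a b

section Aux

variable {W : Type} [Fintype W] [DecidableEq W]

lemma chainStrength_le_one (G : FIG V) : ∀ l : List V, G.chainStrength l ≤ 1
  | [] => le_refl 1
  | [_] => le_refl 1
  | _ :: b :: l =>
    le_trans (min_le_right _ _) (chainStrength_le_one G (b :: l))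

lemma chainStrength_map (G : FIG V) (H : FIG W) (f : V → W)
    (hf : ∀ u v, H.eta (f u) (f v) = G.eta u v) :
    ∀ l : List V, H.chainStrength (l.map f) = G.chainStrength l
  | [] => rfl
  | [_] => rfl
  | a :: b :: l => by
    have ih := chainStrength_map G H f hf (b :: l)
    simp only [List.map_cons, chainStrength] at *
    rw [ih]
    unfold pairMin
    rw [hf a b, hf b a]

lemma pathStrengths_subset (G : FIG V) (H : FIG W) (f : V → W)
    (hinj : Function.Injective f)
    (hf : ∀ u v, H.eta (f u) (f v) = G.eta u v) (x y z : V) :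
    G.pathStrengths x y z ⊆ H.pathStrengths (f x) (f y) (f z) := by
  rintro s ⟨l, hnd, hhd, hcase⟩
  refine ⟨l.map f, hnd.map hinj, ?_, ?_⟩
  · rw [List.head?_map, hhd]; rfl
  · rcases hcase with ⟨hlast, hs⟩ | ⟨hlast, hs⟩
    · left
      refine ⟨by rw [List.getLast?_map, hlast]; rfl, ?_⟩
      rw [chainStrength_map G H f hf, hf y z]; exact hs
    · right
      refine ⟨by rw [List.getLast?_map, hlast]; rfl, ?_⟩
      rw [chainStrength_map G H f hf, hf z y]; exact hs

lemma pathStrengths_nonempty (G : FIG V) (x y z : V) :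
    (G.pathStrengths x y z).Nonempty := by
  by_cases hxy : x = y
  · subst hxy
    exact ⟨_, [x], List.nodup_singleton x, rfl, Or.inl ⟨rfl, rfl⟩⟩
  · exact ⟨_, [x, y], by simp [hxy], rfl, Or.inl ⟨by simp, rfl⟩⟩

lemma pathStrengths_bddAbove (G : FIG V) (x y z : V) :
    BddAbove (G.pathStrengths x y z) := by
  refine ⟨1, ?_⟩
  rintro s ⟨l, _, _, hcase⟩
  rcases hcase with ⟨_, hs⟩ | ⟨_, hs⟩ <;>
    exact hs ▸ le_trans (min_le_left _ _) (chainStrength_le_one G l)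

lemma ICONN_mono (G : FIG V) (H : FIG W) (f : V → W)
    (hinj : Function.Injective f)
    (hf : ∀ u v, H.eta (f u) (f v) = G.eta u v) (x y z : V) :
    G.ICONN x y z ≤ H.ICONN (f x) (f y) (f z) :=
  csSup_le_csSup (pathStrengths_bddAbove H _ _ _) (pathStrengths_nonempty G x y z)
    (pathStrengths_subset G H f hinj hf x y z)

end Aux

/-- **Proposition 8.** If the join of two fuzzy incidence graphs is a strong fuzzy
incidence graph, then both factors are strong fuzzy incidence graphs. -/
theorem strong_of_join_strong (G₁ : FIG V₁) (G₂ : FIG V₂)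
    (h : (G₁.join G₂).Strong) : G₁.Strong ∧ G₂.Strong := by
  constructor
  · intro x y hp
    have hpj : (G₁.join G₂).IsPair (Sum.inl x) (Sum.inl y) := hp
    have hs := h _ _ hpj
    unfold IsStrongPair at hs ⊢
    refine le_trans (ICONN_mono _ _ Sum.inl Sum.inl_injective ?_ x x y) hs
    intro u v
    simp only [deletePair, join, Sum.inl.injEq]
  · intro x y hp
    have hpj : (G₁.join G₂).IsPair (Sum.inr x) (Sum.inr y) := hp
    have hs := h _ _ hpj
    unfold IsStrongPair at hs ⊢
    refine le_trans (ICONN_mono _ _ Sum.inr Sum.inr_injective ?_ x x y) hs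
    intro u v
    simp only [deletePair, join, Sum.inr.injEq]

end FIG
end

section
/- Let X̃₁ and X̃₂ be fuzzy incidence graphs such that for each vertex u of X̃ᵢ (i = 1,2), all pairs incident at u have equal η-weight. Then the join X̃₁ ⊕ X̃₂ is a strong fuzzy incidence graph. -/
open scoped BigOperators

namespace FIG

variable {V V₁ V₂ : Type} [Fintype V] [DecidableEq V]
  [Fintype V₁] [DecidableEq V₁] [Fintype V₂] [DecidableEq V₂]

lemma chainStrength_le_eta (G : FIG V) (a b : V) (l : List V) :
    G.chainStrength (a :: b :: l) ≤ G.eta a b :=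
  le_trans (min_le_left _ _) (min_le_left _ _)

lemma deletePair_eta_le (G : FIG V) (x y u v : V) :
    (G.deletePair x y).eta u v ≤ G.eta u v := by
  simp only [deletePair]
  split
  · exact G.eta_nonneg u v
  · exact le_rfl

lemma le_sSup_range {α : Type*} [Fintype α] (f : α → ℝ) (a : α) :
    f a ≤ sSup (Set.range f) :=
  le_csSup (Set.finite_range f).bddAbove ⟨a, rfl⟩

lemma eta_le_of_pair (G₁ : FIG V₁)
    (h₁ : ∀ x y z : V₁, G₁.IsPair x y → G₁.IsPair x z → G₁.eta x y = G₁.eta x z)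
    {a b : V₁} (hab : 0 < G₁.eta a b) (c : V₁) : G₁.eta a c ≤ G₁.eta a b := by
  rcases (G₁.eta_nonneg a c).lt_or_eq with h | h
  · exact le_of_eq (h₁ a c b h hab)
  · exact h ▸ hab.le

lemma sSup_range_eta_le (G₁ : FIG V₁)
    (h₁ : ∀ x y z : V₁, G₁.IsPair x y → G₁.IsPair x z → G₁.eta x y = G₁.eta x z)
    {a b : V₁} (hab : 0 < G₁.eta a b) :
    sSup (Set.range (G₁.eta a)) ≤ G₁.eta a b :=
  Real.sSup_le (by rintro x ⟨c, rfl⟩; exact eta_le_of_pair G₁ h₁ hab c) hab.le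

lemma join_eta_key (G₁ : FIG V₁) (G₂ : FIG V₂)
    (h₁ : ∀ x y z : V₁, G₁.IsPair x y → G₁.IsPair x z → G₁.eta x y = G₁.eta x z)
    (h₂ : ∀ x y z : V₂, G₂.IsPair x y → G₂.IsPair x z → G₂.eta x y = G₂.eta x z)
    (p q w : V₁ ⊕ V₂) (hpq : 0 < (G₁.join G₂).eta p q) :
    min ((G₁.join G₂).eta p w) ((G₁.join G₂).eta q p) ≤ (G₁.join G₂).eta p q := by
  rcases p with a | a <;> rcases q with b | b
  · -- p = inl a, q = inl b
    have hab : 0 < G₁.eta a b := hpq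
    rcases w with c | d
    · exact le_trans (min_le_left _ _) (eta_le_of_pair G₁ h₁ hab c)
    · refine le_trans (min_le_left _ _) ?_
      show min (G₁.eps a) (min (G₂.eps d) (sSup (Set.range (G₁.eta a)))) ≤ G₁.eta a b
      exact le_trans (min_le_of_right_le (min_le_right _ _))
        (sSup_range_eta_le G₁ h₁ hab)
    -- p = inl a, q = inr b
  · have hfirst : (G₁.join G₂).eta (.inl a) w ≤ sSup (Set.range (G₁.eta a)) := by
      rcases w with c | d
      · exact le_sSup_range (G₁.eta a) c
      · exact min_le_of_right_le (min_le_right _ _)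
    have hsecond : (G₁.join G₂).eta (.inr b) (.inl a) ≤ min (G₁.eps a) (G₂.eps b) := by
      show min (G₁.eps a) (min (G₂.eps b) (sSup (Set.range (G₂.eta b)))) ≤ _
      exact le_min (min_le_left _ _) (min_le_of_right_le (min_le_left _ _))
    show _ ≤ min (G₁.eps a) (min (G₂.eps b) (sSup (Set.range (G₁.eta a))))
    refine le_min (le_trans (min_le_right _ _) (hsecond.trans (min_le_left _ _)))
      (le_min (le_trans (min_le_right _ _) (hsecond.trans (min_le_right _ _)))
        (le_trans (min_le_left _ _) hfirst))
    -- p = inr a, q = inl b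
  · have hfirst : (G₁.join G₂).eta (.inr a) w ≤ sSup (Set.range (G₂.eta a)) := by
      rcases w with c | d
      · exact min_le_of_right_le (min_le_right _ _)
      · exact le_sSup_range (G₂.eta a) d
    have hsecond : (G₁.join G₂).eta (.inl b) (.inr a) ≤ min (G₁.eps b) (G₂.eps a) := by
      show min (G₁.eps b) (min (G₂.eps a) (sSup (Set.range (G₁.eta b)))) ≤ _
      exact le_min (min_le_left _ _) (min_le_of_right_le (min_le_left _ _))
    show _ ≤ min (G₁.eps b) (min (G₂.eps a) (sSup (Set.range (G₂.eta a))))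
    refine le_min (le_trans (min_le_right _ _) (hsecond.trans (min_le_left _ _)))
      (le_min (le_trans (min_le_right _ _) (hsecond.trans (min_le_right _ _)))
        (le_trans (min_le_left _ _) hfirst))
  · -- p = inr a, q = inr b
    have hab : 0 < G₂.eta a b := hpq
    rcases w with c | d
    · refine le_trans (min_le_left _ _) ?_
      show min (G₁.eps c) (min (G₂.eps a) (sSup (Set.range (G₂.eta a)))) ≤ G₂.eta a b
      exact le_trans (min_le_of_right_le (min_le_right _ _))
        (sSup_range_eta_le G₂ h₂ hab)
    · exact le_trans (min_le_left _ _) (eta_le_of_pair G₂ h₂ hab d)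

/-- **Theorem 10.** If in each factor, at every vertex all incident pairs have equal
weight, then the join of the two fuzzy incidence graphs is a strong fuzzy incidence
graph. -/
theorem join_strong_of_forall_incident_pairs_eq (G₁ : FIG V₁) (G₂ : FIG V₂)
    (h₁ : ∀ x y z : V₁, G₁.IsPair x y → G₁.IsPair x z → G₁.eta x y = G₁.eta x z)
    (h₂ : ∀ x y z : V₂, G₂.IsPair x y → G₂.IsPair x z → G₂.eta x y = G₂.eta x z) :
    (G₁.join G₂).Strong := by
  set J := G₁.join G₂ with hJ
  intro p q hpq
  have hpq' : 0 < J.eta p q := hpq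
  have hne : p ≠ q := by
    intro h
    subst h
    have h3 : J.eta p p ≤ 0 :=
      le_trans ((J.eta_le p p).trans (min_le_right _ _)) (le_of_eq (J.rho_irrefl p))
    linarith
  unfold IsStrongPair ICONN
  apply Real.sSup_le _ hpq'.le
  rintro s ⟨l, hnd, hhead, hcase | hcase⟩
  · -- path ends at p : the terminal pair is the deleted pair, of weight 0
    obtain ⟨_, rfl⟩ := hcase
    have h0 : (J.deletePair p q).eta p q = 0 := by simp [deletePair]
    calc min ((J.deletePair p q).chainStrength l) ((J.deletePair p q).eta p q)
        ≤ (J.deletePair p q).eta p q := min_le_right _ _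
      _ = 0 := h0
      _ ≤ J.eta p q := (J.eta_nonneg p q)
  · -- path ends at q
    obtain ⟨hlast, rfl⟩ := hcase
    -- decompose the list
    obtain ⟨t, rfl⟩ : ∃ t, l = p :: t := by
      cases l with
      | nil => simp at hhead
      | cons a t =>
        simp only [List.head?_cons, Option.some.injEq] at hhead
        exact ⟨t, by rw [hhead]⟩
    obtain ⟨w, t', rfl⟩ : ∃ w t', t = w :: t' := by
      cases t with
      | nil =>
        exfalso
        simp [List.getLast?] at hlast
        exact hne hlast
      | cons w t' => exact ⟨w, t', rfl⟩
    have hchain : (J.deletePair p q).chainStrength (p :: w :: t') ≤ J.eta p w :=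
      le_trans (chainStrength_le_eta _ p w t') (deletePair_eta_le J p q p w)
    have hend : (J.deletePair p q).eta q p = J.eta q p := by
      simp [deletePair, Ne.symm hne]
    calc min ((J.deletePair p q).chainStrength (p :: w :: t'))
          ((J.deletePair p q).eta q p)
        ≤ min (J.eta p w) (J.eta q p) := by
          rw [hend]
          exact min_le_min hchain le_rfl
      _ ≤ J.eta p q := join_eta_key G₁ G₂ h₁ h₂ p q w hpq'

end FIG
end

section
/- If X̃₁ and X̃₂ are fuzzy incidence graphs in which every pair is effective, then their Cartesian product X̃ = X̃₁ × X̃₂ is a fuzzy incidence graph in which every pair is effective. -/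
open scoped BigOperators

namespace FIG

variable {V V₁ V₂ : Type} [Fintype V] [DecidableEq V]
  [Fintype V₁] [DecidableEq V₁] [Fintype V₂] [DecidableEq V₂]

/-- The Cartesian product of two fuzzy incidence graphs: `(a₁,b₁)(a₂,b₂)` is an edge
when `a₁ = a₂` and `b₁b₂ ∈ E₂`, or `b₁ = b₂` and `a₁a₂ ∈ E₁`; a pair of the product
exists when both corresponding pairs of the factor exist. -/
noncomputable def cartesian (G₁ : FIG V₁) (G₂ : FIG V₂) : FIG (V₁ × V₂) where
  eps := fun p => min (G₁.eps p.1) (G₂.eps p.2)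
  rho := fun p q =>
    if p.1 = q.1 then min (G₁.eps p.1) (G₂.rho p.2 q.2)
    else if p.2 = q.2 then min (G₁.rho p.1 q.1) (G₂.eps p.2)
    else 0
  eta := fun p q =>
    if p.1 = q.1 then
      (if 0 < G₂.eta p.2 q.2 ∧ 0 < G₂.eta q.2 p.2 then
        min (G₁.eps p.1) (G₂.eta p.2 q.2) else 0)
    else if p.2 = q.2 then
      (if 0 < G₁.eta p.1 q.1 ∧ 0 < G₁.eta q.1 p.1 then
        min (G₁.eta p.1 q.1) (G₂.eps p.2) else 0)
    else 0
  eps_nonneg := fun p => le_min (G₁.eps_nonneg p.1) (G₂.eps_nonneg p.2)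
  eps_le_one := fun p => min_le_of_left_le (G₁.eps_le_one p.1)
  rho_nonneg := by
    intro p q; (try dsimp only); split
    · exact le_min (G₁.eps_nonneg _) (G₂.rho_nonneg _ _)
    · split
      · exact le_min (G₁.rho_nonneg _ _) (G₂.eps_nonneg _)
      · exact le_refl 0
  rho_symm := by
    intro p q; (try dsimp only)
    by_cases h1 : p.1 = q.1
    · simp [h1, G₂.rho_symm p.2 q.2]
    · by_cases h2 : p.2 = q.2
      · simp [h1, Ne.symm h1, h2, G₁.rho_symm p.1 q.1]
      · simp [h1, Ne.symm h1, h2, Ne.symm h2]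
  rho_le := by
    intro p q; (try dsimp only); split
    · rename_i h1
      refine le_min (le_min (min_le_left _ _) (min_le_of_right_le ?_))
        (le_min (h1 ▸ min_le_left _ _) (min_le_of_right_le ?_))
      · exact le_trans (G₂.rho_le p.2 q.2) (min_le_left _ _)
      · exact le_trans (G₂.rho_le p.2 q.2) (min_le_right _ _)
    · split
      · rename_i h1 h2
        refine le_min (le_min (min_le_of_left_le ?_) (min_le_right _ _))
          (le_min (min_le_of_left_le ?_) (h2 ▸ min_le_right _ _))
        · exact le_trans (G₁.rho_le p.1 q.1) (min_le_left _ _)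
        · exact le_trans (G₁.rho_le p.1 q.1) (min_le_right _ _)
      · exact le_min (le_min (G₁.eps_nonneg _) (G₂.eps_nonneg _))
          (le_min (G₁.eps_nonneg _) (G₂.eps_nonneg _))
  rho_irrefl := by
    intro p; (try dsimp only)
    rw [if_pos rfl, G₂.rho_irrefl]
    exact min_eq_right (G₁.eps_nonneg p.1)
  eta_nonneg := by
    intro p q; (try dsimp only); split
    · split
      · exact le_min (G₁.eps_nonneg _) (G₂.eta_nonneg _ _)
      · exact le_refl 0
    · split
      · split
        · exact le_min (G₁.eta_nonneg _ _) (G₂.eps_nonneg _)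
        · exact le_refl 0
      · exact le_refl 0
  eta_le := by
    intro p q; (try dsimp only); split
    · split
      · refine le_min (le_min (min_le_left _ _) (min_le_of_right_le ?_))
          (le_min (min_le_left _ _) (min_le_of_right_le ?_))
        · exact le_trans (G₂.eta_le p.2 q.2) (min_le_left _ _)
        · exact le_trans (G₂.eta_le p.2 q.2) (min_le_right _ _)
      · exact le_min (le_min (G₁.eps_nonneg _) (G₂.eps_nonneg _))
          (le_min (G₁.eps_nonneg _) (G₂.rho_nonneg _ _))
    · split
      · split
        · refine le_min (le_min (min_le_of_left_le ?_) (min_le_right _ _))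
            (le_min (min_le_of_left_le ?_) (min_le_right _ _))
          · exact le_trans (G₁.eta_le p.1 q.1) (min_le_left _ _)
          · exact le_trans (G₁.eta_le p.1 q.1) (min_le_right _ _)
        · exact le_min (le_min (G₁.eps_nonneg _) (G₂.eps_nonneg _))
            (le_min (G₁.rho_nonneg _ _) (G₂.eps_nonneg _))
      · exact le_min (le_min (G₁.eps_nonneg _) (G₂.eps_nonneg _)) (le_refl 0)

/-- **Proposition 21.** The Cartesian product of two fuzzy incidence graphs with
effective pairs is a fuzzy incidence graph with effective pairs. -/
theorem cartesian_effectivePairs (G₁ : FIG V₁) (G₂ : FIG V₂)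
    (h₁ : G₁.EffectivePairs) (h₂ : G₂.EffectivePairs) :
    (G₁.cartesian G₂).EffectivePairs := by
  intro p q hp
  unfold IsPair at hp
  unfold EffectivePair cartesian at *
  dsimp only at hp ⊢
  by_cases h1 : p.1 = q.1
  · rw [if_pos h1] at hp ⊢
    by_cases hpos : 0 < G₂.eta p.2 q.2 ∧ 0 < G₂.eta q.2 p.2
    · rw [if_pos hpos] at hp ⊢
      rw [h₂ p.2 q.2 hpos.1, if_pos h1, inf_inf_distrib_left]
    · rw [if_neg hpos] at hp; exact absurd hp (lt_irrefl 0)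
  · rw [if_neg h1] at hp ⊢
    by_cases h2 : p.2 = q.2
    · rw [if_pos h2] at hp ⊢
      by_cases hpos : 0 < G₁.eta p.1 q.1 ∧ 0 < G₁.eta q.1 p.1
      · rw [if_pos hpos] at hp ⊢
        rw [h₁ p.1 q.1 hpos.1, if_neg h1, if_pos h2, inf_inf_distrib_right]
      · rw [if_neg hpos] at hp; exact absurd hp (lt_irrefl 0)
    · rw [if_neg h2] at hp; exact absurd hp (lt_irrefl 0)

end FIG
end

section
/- Let X̃₁ and X̃₂ be fuzzy incidence graphs such that there exists an edge a₁a₂ ∈ E₁ whose pair weights satisfy η₁(a₁,a₁a₂) ≥ ε₂(v) and η₁(a₂,a₁a₂) ≥ ε₂(v) for some vertex v ∈ V₂. Then in the Cartesian product X̃₁ × X̃₂ the pairs ((a₁,v),(a₁,v)(a₂,v)) and ((a₂,v),(a₁,v)(a₂,v)) are effective pairs. -/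
open scoped BigOperators

namespace FIG

variable {V V₁ V₂ : Type} [Fintype V] [DecidableEq V]
  [Fintype V₁] [DecidableEq V₁] [Fintype V₂] [DecidableEq V₂]

lemma cartesian_effectivePair_aux (G₁ : FIG V₁) (G₂ : FIG V₂)
    (a₁ a₂ : V₁) (v : V₂) (he : 0 < G₁.rho a₁ a₂)
    (h₁ : G₂.eps v ≤ G₁.eta a₁ a₂) (h₂ : G₂.eps v ≤ G₁.eta a₂ a₁) :
    (G₁.cartesian G₂).EffectivePair (a₁, v) (a₂, v) := by
  have hne : a₁ ≠ a₂ := by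
    rintro rfl; rw [G₁.rho_irrefl] at he; exact lt_irrefl 0 he
  unfold EffectivePair cartesian
  dsimp only
  rw [if_neg hne, if_neg hne, if_pos rfl, if_pos rfl]
  rcases lt_or_eq_of_le (G₂.eps_nonneg v) with hv | hv
  · have he1 : 0 < G₁.eta a₁ a₂ := lt_of_lt_of_le hv h₁
    have he2 : 0 < G₁.eta a₂ a₁ := lt_of_lt_of_le hv h₂
    rw [if_pos ⟨he1, he2⟩]
    have hr : G₂.eps v ≤ G₁.rho a₁ a₂ :=
      le_trans h₁ (le_trans (G₁.eta_le a₁ a₂) (min_le_right _ _))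
    have hε : G₂.eps v ≤ G₁.eps a₁ :=
      le_trans h₁ (le_trans (G₁.eta_le a₁ a₂) (min_le_left _ _))
    rw [min_eq_right h₁, min_eq_right hε, min_eq_right hr, min_self]
  · rw [← hv]
    have h0 : ∀ r : ℝ, 0 ≤ r → min r 0 = 0 := fun r hr => min_eq_right hr
    rw [h0 _ (G₁.eps_nonneg a₁), h0 _ (G₁.rho_nonneg a₁ a₂), min_self]
    split
    · rw [h0 _ (G₁.eta_nonneg a₁ a₂)]
    · rfl

/-- **Proposition 23.** If `a₁a₂` is an edge of `G₁` whose two pair weights are at least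
`ε₂ v` for some vertex `v` of `G₂`, then in the Cartesian product the two pairs on the
edge `(a₁,v)(a₂,v)` are effective. -/
theorem cartesian_effectivePair_of_eps_le (G₁ : FIG V₁) (G₂ : FIG V₂)
    (a₁ a₂ : V₁) (v : V₂) (he : 0 < G₁.rho a₁ a₂)
    (h₁ : G₂.eps v ≤ G₁.eta a₁ a₂) (h₂ : G₂.eps v ≤ G₁.eta a₂ a₁) :
    (G₁.cartesian G₂).EffectivePair (a₁, v) (a₂, v) ∧
      (G₁.cartesian G₂).EffectivePair (a₂, v) (a₁, v) := by
  refine ⟨cartesian_effectivePair_aux G₁ G₂ a₁ a₂ v he h₁ h₂,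
    cartesian_effectivePair_aux G₁ G₂ a₂ a₁ v (G₁.rho_symm a₁ a₂ ▸ he) h₂ h₁⟩

end FIG
end
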